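/- arXiv:1105.5996 — 2 statements merged into one kernel-verified Lean document; each statement's English description precedes it below -/
import Mathlib

section
/- Let A be a self-adjoint operator on L²(ℝⁿ), λ ∈ ℝ, ε > 0, and suppose for some μ ≥ 1 and all 0 < ε ≤ 1: ‖⟨x⟩^{-1/2-ϵ}(A - λ ± iε)^{-1}⟨x⟩^{-1/2-ϵ}‖ ≤ C μ and ‖(A - λ ± iε)^{-1}⟨x⟩^{-1/2-ϵ}‖ ≤ C μ^{1/2} ε^{-1/2}. Then for every 0 ≤ ν ≤ 1, ‖⟨x⟩^{-ν/2-ϵ}(A - λ ± iε)^{-1}⟨x⟩^{-1/2-ϵ}‖ ≤ C' μ^{(ν+1)/2} ε^{(ν-1)/2}, obtained by splitting the weight at ⟨x⟩ = M with M = μ/ε. -/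
open MeasureTheory Set Complex ENNReal

noncomputable def jbracket8 (n : ℕ) (s : ℝ) (x : EuclideanSpace ℝ (Fin n)) : ℝ :=
  (1 + ‖x‖ ^ 2) ^ (s / 2)

def wOpBound8 (n : ℕ) (sout sin : ℝ)
    (T : Lp ℂ 2 (volume : Measure (EuclideanSpace ℝ (Fin n))) →L[ℂ]
      Lp ℂ 2 (volume : Measure (EuclideanSpace ℝ (Fin n)))) (M : ℝ) : Prop :=
  ∀ u f : Lp ℂ 2 (volume : Measure (EuclideanSpace ℝ (Fin n))),
    (u : EuclideanSpace ℝ (Fin n) → ℂ)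
        =ᵐ[volume] (fun x => (jbracket8 n sin x : ℂ) * (f : EuclideanSpace ℝ (Fin n) → ℂ) x) →
    eLpNorm (fun x => (jbracket8 n sout x : ℂ)
        * ((T u : Lp ℂ 2 (volume : Measure (EuclideanSpace ℝ (Fin n))))
            : EuclideanSpace ℝ (Fin n) → ℂ) x) 2 volume
      ≤ ENNReal.ofReal M * eLpNorm (f : EuclideanSpace ℝ (Fin n) → ℂ) 2 volume

set_option maxHeartbeats 1000000 in
/-- interpolation of weighted resolvent bounds.  If
`‖⟨x⟩^{-1/2-ϵ}(A-λ∓iε)⁻¹⟨x⟩^{-1/2-ϵ}‖ ≤ Cμ` and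
`‖(A-λ∓iε)⁻¹⟨x⟩^{-1/2-ϵ}‖ ≤ Cμ^{1/2}ε^{-1/2}` for `0 < ε ≤ 1`, then for `0 ≤ ν ≤ 1`,
`‖⟨x⟩^{-ν/2-ϵ}(A-λ∓iε)⁻¹⟨x⟩^{-1/2-ϵ}‖ ≤ C'μ^{(ν+1)/2}ε^{(ν-1)/2}`. -/
theorem stmt_8 (n : ℕ)
    (A : Lp ℂ 2 (volume : Measure (EuclideanSpace ℝ (Fin n))) →L[ℂ]
      Lp ℂ 2 (volume : Measure (EuclideanSpace ℝ (Fin n))))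
    (hA : IsSelfAdjoint A) (lam ϵ μ C : ℝ) (hϵ : 0 < ϵ) (hμ : 1 ≤ μ) (hC : 0 < C)
    (h1 : ∀ σ : ℝ, σ = 1 ∨ σ = -1 → ∀ ε ∈ Ioc (0 : ℝ) 1,
      wOpBound8 n (-(1 / 2 + ϵ)) (-(1 / 2 + ϵ))
        (Ring.inverse (A - (((lam : ℂ) + σ * I * ε) : ℂ) • 1)) (C * μ))
    (h2 : ∀ σ : ℝ, σ = 1 ∨ σ = -1 → ∀ ε ∈ Ioc (0 : ℝ) 1,
      wOpBound8 n 0 (-(1 / 2 + ϵ))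
        (Ring.inverse (A - (((lam : ℂ) + σ * I * ε) : ℂ) • 1))
        (C * μ ^ ((1 : ℝ) / 2) * ε ^ (-(1 : ℝ) / 2))) :
    ∃ C' : ℝ, 0 < C' ∧ ∀ ν ∈ Icc (0 : ℝ) 1, ∀ σ : ℝ, σ = 1 ∨ σ = -1 →
      ∀ ε ∈ Ioc (0 : ℝ) 1,
        wOpBound8 n (-(ν / 2 + ϵ)) (-(1 / 2 + ϵ))
          (Ring.inverse (A - (((lam : ℂ) + σ * I * ε) : ℂ) • 1))
          (C' * μ ^ ((ν + 1) / 2) * ε ^ ((ν - 1) / 2)) := by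
  refine ⟨2 * C, by linarith, ?_⟩
  intro ν hν σ hσ ε hε u f hu
  set T := Ring.inverse (A - (((lam : ℂ) + σ * I * ε) : ℂ) • 1) with hTdef
  have hε0 : (0:ℝ) < ε := hε.1
  have hμ0 : (0:ℝ) < μ := lt_of_lt_of_le one_pos hμ
  set M : ℝ := (μ * ε)⁻¹ with hMdef
  have hM0 : 0 < M := by positivity
  set a : ℝ := M ^ ((1 - ν)/2) with hadef
  set b : ℝ := M ^ (-ν/2) with hbdef
  have ha0 : 0 < a := Real.rpow_pos_of_pos hM0 _
  have hb0 : 0 < b := Real.rpow_pos_of_pos hM0 _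
  -- pointwise weight bound
  have hpt : ∀ x : EuclideanSpace ℝ (Fin n),
      jbracket8 n (-(ν/2+ϵ)) x ≤ a * jbracket8 n (-(1/2+ϵ)) x + b := by
    intro x
    set t : ℝ := 1 + ‖x‖ ^ 2 with htdef
    have ht1 : (1:ℝ) ≤ t := by rw [htdef]; nlinarith [sq_nonneg ‖x‖]
    have ht0 : (0:ℝ) < t := lt_of_lt_of_le one_pos ht1
    have hjb : ∀ s : ℝ, jbracket8 n s x = t ^ (s/2) := fun s => rfl
    rw [hjb, hjb]
    rcases le_or_gt (t ^ ((1:ℝ)/2)) M with hle | hlt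
    · have h1 : t ^ ((1-ν)/4) ≤ a := by
        have := Real.rpow_le_rpow (Real.rpow_nonneg ht0.le _) hle (by linarith [hν.2] : 0 ≤ (1-ν)/2)
        rwa [← Real.rpow_mul ht0.le, show (1:ℝ)/2 * ((1-ν)/2) = (1-ν)/4 by ring] at this
      have heq : t ^ ((-(ν/2+ϵ))/2) = t ^ ((1-ν)/4) * t ^ ((-(1/2+ϵ))/2) := by
        rw [← Real.rpow_add ht0]; ring_nf
      have h2 : t ^ ((1-ν)/4) * t ^ ((-(1/2+ϵ))/2) ≤ a * t ^ ((-(1/2+ϵ))/2) :=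
        mul_le_mul_of_nonneg_right h1 (Real.rpow_nonneg ht0.le _)
      have hb' : (0:ℝ) ≤ b := hb0.le
      linarith [heq ▸ h2]
    · have h1 : t ^ ((-(ν/2+ϵ))/2) ≤ t ^ (-ν/4) :=
        Real.rpow_le_rpow_of_exponent_le ht1 (by linarith)
      have h2 : t ^ (-ν/4) ≤ b := by
        have := Real.rpow_le_rpow_of_nonpos hM0 hlt.le
          (by linarith [hν.1] : -ν/2 ≤ (0:ℝ))
        rwa [← Real.rpow_mul ht0.le, show (1:ℝ)/2 * (-ν/2) = -ν/4 by ring] at this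
      have h3 : (0:ℝ) ≤ a * t ^ ((-(1/2+ϵ))/2) :=
        mul_nonneg ha0.le (Real.rpow_nonneg ht0.le _)
      linarith
  -- the two resolvent bounds
  have H1 := h1 σ hσ ε hε u f hu
  have H2 := h2 σ hσ ε hε u f hu
  have hjb0 : ∀ x : EuclideanSpace ℝ (Fin n), jbracket8 n 0 x = 1 := by
    intro x
    simp [jbracket8]
  have H2' : eLpNorm ((T u : Lp ℂ 2 (volume : Measure (EuclideanSpace ℝ (Fin n))))
      : EuclideanSpace ℝ (Fin n) → ℂ) 2 volume
      ≤ ENNReal.ofReal (C * μ ^ ((1 : ℝ) / 2) * ε ^ (-(1 : ℝ) / 2))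
        * eLpNorm (f : EuclideanSpace ℝ (Fin n) → ℂ) 2 volume := by
    have : (fun x => (jbracket8 n 0 x : ℂ)
        * ((T u : Lp ℂ 2 (volume : Measure (EuclideanSpace ℝ (Fin n))))
            : EuclideanSpace ℝ (Fin n) → ℂ) x)
        = ((T u : Lp ℂ 2 (volume : Measure (EuclideanSpace ℝ (Fin n))))
            : EuclideanSpace ℝ (Fin n) → ℂ) := by
      funext x; rw [hjb0 x]; simp
    rwa [this] at H2
  set Tu : EuclideanSpace ℝ (Fin n) → ℂ :=
    ((T u : Lp ℂ 2 (volume : Measure (EuclideanSpace ℝ (Fin n))))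
      : EuclideanSpace ℝ (Fin n) → ℂ) with hTu
  obtain ⟨G1, hG1⟩ : ∃ G : EuclideanSpace ℝ (Fin n) → ℝ,
      G = fun x => a * ‖(jbracket8 n (-(1/2+ϵ)) x : ℂ) * Tu x‖ := ⟨_, rfl⟩
  obtain ⟨G2, hG2⟩ : ∃ G : EuclideanSpace ℝ (Fin n) → ℝ,
      G = fun x => b * ‖Tu x‖ := ⟨_, rfl⟩
  have hTum : AEStronglyMeasurable Tu volume := (Lp.aestronglyMeasurable _)
  have hjcont : ∀ s : ℝ, Continuous (fun x : EuclideanSpace ℝ (Fin n) => (jbracket8 n s x : ℂ)) := by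
    intro s
    apply Continuous.comp Complex.continuous_ofReal
    apply Continuous.rpow_const
    · exact (continuous_const.add ((continuous_norm).pow 2))
    · intro x; left; positivity
  have hG1m : AEStronglyMeasurable G1 volume := by
    rw [hG1]
    exact aestronglyMeasurable_const.mul (((hjcont _).aestronglyMeasurable.mul hTum).norm)
  have hG2m : AEStronglyMeasurable G2 volume := by
    rw [hG2]
    exact aestronglyMeasurable_const.mul hTum.norm
  -- monotonicity step
  have step1 : eLpNorm (fun x => (jbracket8 n (-(ν/2+ϵ)) x : ℂ) * Tu x) 2 volume
      ≤ eLpNorm (G1 + G2) 2 volume := by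
    apply eLpNorm_mono
    intro x
    have hjnn : 0 ≤ jbracket8 n (-(ν/2+ϵ)) x := Real.rpow_nonneg (by positivity) _
    have hjnn' : 0 ≤ jbracket8 n (-(1/2+ϵ)) x := Real.rpow_nonneg (by positivity) _
    have h1 : ‖(jbracket8 n (-(ν/2+ϵ)) x : ℂ) * Tu x‖
        = jbracket8 n (-(ν/2+ϵ)) x * ‖Tu x‖ := by
      rw [norm_mul, Complex.norm_real, Real.norm_of_nonneg hjnn]
    have h2 : ‖(jbracket8 n (-(1/2+ϵ)) x : ℂ) * Tu x‖
        = jbracket8 n (-(1/2+ϵ)) x * ‖Tu x‖ := by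
      rw [norm_mul, Complex.norm_real, Real.norm_of_nonneg hjnn']
    have hGnn : 0 ≤ (G1 + G2) x := by
      simp only [Pi.add_apply, hG1, hG2]
      positivity
    rw [h1, Real.norm_of_nonneg hGnn]
    simp only [Pi.add_apply, hG1, hG2, h2]
    have := hpt x
    nlinarith [norm_nonneg (Tu x), mul_le_mul_of_nonneg_right this (norm_nonneg (Tu x))]
  have step2 : eLpNorm (G1 + G2) 2 volume ≤ eLpNorm G1 2 volume + eLpNorm G2 2 volume :=
    eLpNorm_add_le hG1m hG2m (by norm_num)
  have hG1n : eLpNorm G1 2 volume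
      = ENNReal.ofReal a * eLpNorm (fun x => (jbracket8 n (-(1/2+ϵ)) x : ℂ) * Tu x) 2 volume := by
    have : G1 = a • (fun x => ‖(jbracket8 n (-(1/2+ϵ)) x : ℂ) * Tu x‖) := hG1
    rw [this, eLpNorm_const_smul, eLpNorm_norm]
    congr 1
    exact Real.enorm_eq_ofReal ha0.le
  have hG2n : eLpNorm G2 2 volume = ENNReal.ofReal b * eLpNorm Tu 2 volume := by
    have : G2 = b • (fun x => ‖Tu x‖) := hG2
    rw [this, eLpNorm_const_smul, eLpNorm_norm]
    congr 1
    exact Real.enorm_eq_ofReal hb0.le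
  -- scalar identities
  have key1 : a * (C * μ) = C * μ ^ ((ν + 1) / 2) * ε ^ ((ν - 1) / 2) := by
    have ha' : a = μ ^ ((ν-1)/2) * ε ^ ((ν-1)/2) := by
      rw [hadef, hMdef, ← Real.rpow_neg_one (μ * ε)]
      rw [← Real.rpow_mul (by positivity), show (-1 : ℝ) * ((1-ν)/2) = (ν-1)/2 by ring,
        Real.mul_rpow hμ0.le hε0.le]
    rw [ha']
    have hmm : μ ^ ((ν-1)/2) * μ = μ ^ ((ν+1)/2) := by
      nth_rewrite 2 [← Real.rpow_one μ]
      rw [← Real.rpow_add hμ0, show (ν-1)/2 + 1 = (ν+1)/2 from by ring]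
    calc μ ^ ((ν-1)/2) * ε ^ ((ν-1)/2) * (C * μ)
        = C * (μ ^ ((ν-1)/2) * μ) * ε ^ ((ν-1)/2) := by ring
      _ = C * μ ^ ((ν + 1) / 2) * ε ^ ((ν - 1) / 2) := by rw [hmm]
  have key2 : b * (C * μ ^ ((1 : ℝ) / 2) * ε ^ (-(1 : ℝ) / 2))
      = C * μ ^ ((ν + 1) / 2) * ε ^ ((ν - 1) / 2) := by
    have hb' : b = μ ^ (ν/2) * ε ^ (ν/2) := by
      rw [hbdef, hMdef, ← Real.rpow_neg_one (μ * ε)]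
      rw [← Real.rpow_mul (by positivity), show (-1 : ℝ) * (-ν/2) = ν/2 by ring,
        Real.mul_rpow hμ0.le hε0.le]
    rw [hb']
    have hm : μ ^ (ν/2) * μ ^ ((1:ℝ)/2) = μ ^ ((ν+1)/2) := by
      rw [← Real.rpow_add hμ0, show ν/2 + 1/2 = (ν+1)/2 from by ring]
    have he : ε ^ (ν/2) * ε ^ (-(1:ℝ)/2) = ε ^ ((ν-1)/2) := by
      rw [← Real.rpow_add hε0, show ν/2 + -1/2 = (ν-1)/2 from by ring]
    calc μ ^ (ν/2) * ε ^ (ν/2) * (C * μ ^ ((1 : ℝ) / 2) * ε ^ (-(1 : ℝ) / 2))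
        = C * (μ ^ (ν/2) * μ ^ ((1:ℝ)/2)) * (ε ^ (ν/2) * ε ^ (-(1:ℝ)/2)) := by ring
      _ = C * μ ^ ((ν + 1) / 2) * ε ^ ((ν - 1) / 2) := by rw [hm, he]
  -- assemble
  set N := eLpNorm (f : EuclideanSpace ℝ (Fin n) → ℂ) 2 volume with hN
  set K := C * μ ^ ((ν + 1) / 2) * ε ^ ((ν - 1) / 2) with hK
  have hK0 : 0 ≤ K := by
    rw [hK]; positivity
  calc eLpNorm (fun x => (jbracket8 n (-(ν/2+ϵ)) x : ℂ) * Tu x) 2 volume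
      ≤ eLpNorm G1 2 volume + eLpNorm G2 2 volume := step1.trans step2
    _ ≤ ENNReal.ofReal a * (ENNReal.ofReal (C * μ) * N)
        + ENNReal.ofReal b * (ENNReal.ofReal (C * μ ^ ((1 : ℝ) / 2) * ε ^ (-(1 : ℝ) / 2)) * N) := by
        rw [hG1n, hG2n]
        exact add_le_add (mul_le_mul_right H1 _) (mul_le_mul_right H2' _)
    _ = ENNReal.ofReal (a * (C * μ)) * N
        + ENNReal.ofReal (b * (C * μ ^ ((1 : ℝ) / 2) * ε ^ (-(1 : ℝ) / 2))) * N := by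
        rw [ENNReal.ofReal_mul ha0.le, ENNReal.ofReal_mul hb0.le]; ring
    _ = ENNReal.ofReal K * N + ENNReal.ofReal K * N := by rw [key1, key2]
    _ = ENNReal.ofReal (2 * C * μ ^ ((ν + 1) / 2) * ε ^ ((ν - 1) / 2)) * N := by
        rw [← add_mul, ← ENNReal.ofReal_add hK0 hK0]
        congr 2
        rw [hK]; ring
end

section
/- Suppose K : [1,∞) × ℝ → ℂ satisfies |K(w,t)| ≤ C_{m,N} w^{m - (n-1)/2} |t|^{-m} (|t-w|^{-N} + |t+w|^{-N}) for all integers m, N ≥ 0 (with constants depending on m, N), uniformly in w ≥ 1, t ≠ 0. Then for every real s with 0 ≤ s ≤ (n-1)/2 one has |K(w,t)| ≤ C_s |t|^{-s} w^{s-(n-1)/2} for |t| ≥ 2w, and ∫_{-∞}^∞ |t|^{2s}|K(w,t)|² dt ≤ C w^{2s-n+1}. -/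
open MeasureTheory ENNReal
set_option maxHeartbeats 4000000

private lemma aux_interp {w T s a μ : ℝ} (hw : 0 < w) (hwT : w ≤ T) (hsμ : s ≤ μ) :
    w ^ (μ - a) * T ^ (-μ) ≤ w ^ (s - a) * T ^ (-s) := by
  have hT : 0 < T := hw.trans_le hwT
  have h1 : w ^ (μ - a) = w ^ (s - a) * w ^ (μ - s) := by
    rw [← Real.rpow_add hw]; congr 1; ring
  have h2 : T ^ (-μ) = T ^ (-s) * T ^ (-(μ - s)) := by
    rw [← Real.rpow_add hT]; congr 1; ring
  have h3 : w ^ (μ - s) * T ^ (-(μ - s)) ≤ 1 := by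
    rw [Real.rpow_neg hT.le, ← div_eq_mul_inv, div_le_one (Real.rpow_pos_of_pos hT _)]
    exact Real.rpow_le_rpow hw.le hwT (sub_nonneg.mpr hsμ)
  calc w ^ (μ - a) * T ^ (-μ) = (w ^ (s - a) * T ^ (-s)) * (w ^ (μ - s) * T ^ (-(μ - s))) := by
        rw [h1, h2]; ring
    _ ≤ (w ^ (s - a) * T ^ (-s)) * 1 := by
        exact mul_le_mul_of_nonneg_left h3 (by positivity)
    _ = w ^ (s - a) * T ^ (-s) := by ring

private lemma inv_sq_cmp {x : ℝ} (hx : 1 < |x|) : (x ^ 2)⁻¹ ≤ 2 * (1 + x ^ 2)⁻¹ := by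
  have hx2 : (1:ℝ) < x ^ 2 := by
    have := sq_abs x ▸ one_lt_pow₀ hx (two_ne_zero)
    nlinarith [sq_abs x, hx]
  have h1 : (1:ℝ)/(x^2) ≤ 2/(1 + x^2) := by
    rw [div_le_div_iff₀ (by linarith) (by positivity)]; nlinarith
  calc (x^2)⁻¹ = 1/(x^2) := (one_div _).symm
    _ ≤ 2/(1+x^2) := h1
    _ = 2 * (1+x^2)⁻¹ := by rw [div_eq_mul_inv]

/-- if `|K(w,t)| ≤ C_{m,N} w^{m-(n-1)/2}|t|^{-m}(|t-w|^{-N}+|t+w|^{-N})`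
for all integers `m, N ≥ 0`, then for `0 ≤ s ≤ (n-1)/2`:
`|K(w,t)| ≤ C_s |t|^{-s} w^{s-(n-1)/2}` for `|t| ≥ 2w`, and
`∫ |t|^{2s} |K(w,t)|² dt ≤ C w^{2s-n+1}`. -/
theorem stmt_18 (n : ℕ) (hn : 2 ≤ n) (K : ℝ → ℝ → ℂ) (hmeas : ∀ w, Measurable (K w))
    (hK : ∀ m N : ℕ, ∃ C : ℝ, 0 < C ∧ ∀ w ≥ (1 : ℝ), ∀ t : ℝ, t ≠ 0 →
      ‖K w t‖ ≤ C * w ^ ((m : ℝ) - ((n : ℝ) - 1) / 2) * |t| ^ (-(m : ℝ))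
        * (|t - w| ^ (-(N : ℝ)) + |t + w| ^ (-(N : ℝ)))) :
    ∀ s : ℝ, 0 ≤ s → s ≤ ((n : ℝ) - 1) / 2 →
      (∃ Cs : ℝ, 0 < Cs ∧ ∀ w ≥ (1 : ℝ), ∀ t : ℝ, 2 * w ≤ |t| →
        ‖K w t‖ ≤ Cs * |t| ^ (-s) * w ^ (s - ((n : ℝ) - 1) / 2)) ∧
      (∃ C : ℝ, 0 < C ∧ ∀ w ≥ (1 : ℝ),
        ∫⁻ t : ℝ, ENNReal.ofReal (|t| ^ (2 * s)) * (‖K w t‖₊ : ℝ≥0∞) ^ 2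
          ≤ ENNReal.ofReal (C * w ^ (2 * s - (n : ℝ) + 1))) := by
  intro s hs0 hs1
  set A : ℝ := ((n : ℝ) - 1) / 2 with hA
  set m : ℕ := ⌈s⌉₊ with hm
  have hsm : s ≤ (m : ℝ) := Nat.le_ceil s
  obtain ⟨C0, hC0, hb0⟩ := hK 0 0
  obtain ⟨C2, hC2, hb2⟩ := hK 0 2
  obtain ⟨Cm, hCm, hbm⟩ := hK m 1
  obtain ⟨Cp, hCp, hbp⟩ := hK m 0
  constructor
  · -- pointwise bound for |t| ≥ 2w
    refine ⟨2 * Cp, by positivity, fun w hw t ht => ?_⟩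
    have hw0 : (0:ℝ) < w := lt_of_lt_of_le one_pos hw
    have hwt : w ≤ |t| := le_trans (by linarith) ht
    have ht0 : t ≠ 0 := by
      intro h; rw [h, abs_zero] at ht; linarith
    have := hbp w hw t ht0
    simp only [Nat.cast_zero, neg_zero, Real.rpow_zero] at this
    calc ‖K w t‖ ≤ Cp * w ^ ((m : ℝ) - A) * |t| ^ (-(m : ℝ)) * (1 + 1) := this
      _ = 2 * Cp * (w ^ ((m : ℝ) - A) * |t| ^ (-(m : ℝ))) := by ring
      _ ≤ 2 * Cp * (w ^ (s - A) * |t| ^ (-s)) := by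
          exact mul_le_mul_of_nonneg_left (aux_interp hw0 hwt hsm) (by positivity)
      _ = 2 * Cp * |t| ^ (-s) * w ^ (s - A) := by ring
  · -- the L² estimate
    set D : ℝ := (2:ℝ) ^ (2 * s) * 8 * (C0 ^ 2 + C2 ^ 2) + 48 * Cm ^ 2 with hD
    have hDpos : 0 < D := by positivity
    have key : ∀ w : ℝ, 1 ≤ w → ∀ t : ℝ, t ≠ 0 →
        |t| ^ (2 * s) * ‖K w t‖ ^ 2 ≤
          D * w ^ (2 * s - (n : ℝ) + 1) * ((1 + (t - w) ^ 2)⁻¹ + (1 + (t + w) ^ 2)⁻¹) := by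
      intro w hw t ht0
      have hw0 : (0:ℝ) < w := lt_of_lt_of_le one_pos hw
      have ht : (0:ℝ) < |t| := abs_pos.mpr ht0
      set g1 : ℝ := (1 + (t - w) ^ 2)⁻¹ with hg1def
      set g2 : ℝ := (1 + (t + w) ^ 2)⁻¹ with hg2def
      have hg1pos : 0 < g1 := by positivity
      have hg2pos : 0 < g2 := by positivity
      have hg1le : g1 ≤ 1 := by rw [hg1def]; rw [inv_le_one_iff₀]; right; nlinarith [sq_nonneg (t - w)]
      have hg2le : g2 ≤ 1 := by rw [hg2def]; rw [inv_le_one_iff₀]; right; nlinarith [sq_nonneg (t + w)]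
      have hsplit : w ^ (2 * s - (n:ℝ) + 1) = w ^ (2 * s) * w ^ (1 - (n:ℝ)) := by
        rw [← Real.rpow_add hw0]; congr 1; ring
      have hwA2 : (w ^ (-A)) ^ 2 = w ^ (1 - (n:ℝ)) := by
        rw [sq, ← Real.rpow_add hw0]; congr 1; rw [hA]; ring
      rcases le_or_gt |t| (2 * w) with hcase | hcase
      · -- |t| ≤ 2w
        have hts : |t| ^ (2 * s) ≤ (2:ℝ) ^ (2 * s) * w ^ (2 * s) := by
          rw [← Real.mul_rpow (by norm_num) hw0.le]
          exact Real.rpow_le_rpow (abs_nonneg t) hcase (by positivity)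
        by_cases hsing : |t - w| ≤ 1 ∨ |t + w| ≤ 1
        · -- near the singularities : use the (m,N)=(0,0) bound
          have hb := hb0 w hw t ht0
          simp only [Nat.cast_zero, neg_zero, Real.rpow_zero, zero_sub] at hb
          have hKb : ‖K w t‖ ≤ 2 * C0 * w ^ (-A) := by
            calc ‖K w t‖ ≤ C0 * w ^ (-A) * 1 * (1 + 1) := hb
              _ = 2 * C0 * w ^ (-A) := by ring
          have hK2 : ‖K w t‖ ^ 2 ≤ 4 * C0 ^ 2 * w ^ (1 - (n:ℝ)) := by
            calc ‖K w t‖ ^ 2 ≤ (2 * C0 * w ^ (-A)) ^ 2 :=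
                  pow_le_pow_left₀ (norm_nonneg _) hKb 2
              _ = 4 * C0 ^ 2 * (w ^ (-A)) ^ 2 := by ring
              _ = 4 * C0 ^ 2 * w ^ (1 - (n:ℝ)) := by rw [hwA2]
          have hgsum : (1:ℝ)/2 ≤ g1 + g2 := by
            rcases hsing with h | h
            · have : (t - w)^2 ≤ 1 := by nlinarith [sq_abs (t - w), abs_nonneg (t - w)]
              have : (1:ℝ)/2 ≤ g1 := by
                rw [hg1def, le_inv_comm₀ (by norm_num) (by positivity)]; · linarith
              linarith
            · have : (t + w)^2 ≤ 1 := by nlinarith [sq_abs (t + w), abs_nonneg (t + w)]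
              have : (1:ℝ)/2 ≤ g2 := by
                rw [hg2def, le_inv_comm₀ (by norm_num) (by positivity)]; · linarith
              linarith
          have hDge : (2:ℝ) ^ (2*s) * 8 * C0 ^ 2 ≤ D := by
            rw [hD]; nlinarith [sq_nonneg C2, sq_nonneg Cm, Real.rpow_pos_of_pos (by norm_num : (0:ℝ) < 2) (2*s)]
          calc |t| ^ (2*s) * ‖K w t‖ ^ 2
              ≤ ((2:ℝ) ^ (2*s) * w ^ (2*s)) * (4 * C0 ^ 2 * w ^ (1 - (n:ℝ))) := by
                exact mul_le_mul hts hK2 (by positivity) (by positivity)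
            _ = ((2:ℝ) ^ (2*s) * 8 * C0 ^ 2) * (w ^ (2*s) * w ^ (1-(n:ℝ))) * (1/2) := by ring
            _ ≤ D * (w ^ (2*s) * w ^ (1-(n:ℝ))) * (g1 + g2) := by
                have h1 : ((2:ℝ) ^ (2*s) * 8 * C0 ^ 2) * (w ^ (2*s) * w ^ (1-(n:ℝ))) ≤
                    D * (w ^ (2*s) * w ^ (1-(n:ℝ))) :=
                  mul_le_mul_of_nonneg_right hDge (by positivity)
                have h2 : (0:ℝ) ≤ D * (w ^ (2*s) * w ^ (1-(n:ℝ))) := by positivity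
                calc ((2:ℝ) ^ (2*s) * 8 * C0 ^ 2) * (w ^ (2*s) * w ^ (1-(n:ℝ))) * (1/2)
                    ≤ D * (w ^ (2*s) * w ^ (1-(n:ℝ))) * (1/2) :=
                      mul_le_mul_of_nonneg_right h1 (by norm_num)
                  _ ≤ D * (w ^ (2*s) * w ^ (1-(n:ℝ))) * (g1 + g2) :=
                      mul_le_mul_of_nonneg_left hgsum h2
            _ = D * w ^ (2*s - (n:ℝ) + 1) * (g1 + g2) := by rw [hsplit]
        · -- away from singularities : use the (m,N)=(0,2) bound
          push_neg at hsing
          obtain ⟨hu, hv⟩ := hsing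
          have hb := hb2 w hw t ht0
          simp only [Nat.cast_zero, Nat.cast_ofNat, neg_zero, Real.rpow_zero, zero_sub] at hb
          have hconv : ∀ x : ℝ, |x| ^ (-(2:ℝ)) = (x ^ 2)⁻¹ := by
            intro x
            rw [show (-(2:ℝ)) = -((2:ℕ):ℝ) by norm_num, Real.rpow_neg (abs_nonneg x),
              Real.rpow_natCast, sq_abs]
          have hKb : ‖K w t‖ ≤ 2 * C2 * w ^ (-A) * (g1 + g2) := by
            have h1 : |t - w| ^ (-(2:ℝ)) ≤ 2 * g1 := by
              rw [hconv]; exact hg1def ▸ inv_sq_cmp hu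
            have h2 : |t + w| ^ (-(2:ℝ)) ≤ 2 * g2 := by
              rw [hconv]; exact hg2def ▸ inv_sq_cmp hv
            calc ‖K w t‖ ≤ C2 * w ^ (-A) * 1 * (|t - w| ^ (-(2:ℝ)) + |t + w| ^ (-(2:ℝ))) := hb
              _ ≤ C2 * w ^ (-A) * 1 * (2 * g1 + 2 * g2) := by
                  apply mul_le_mul_of_nonneg_left (by linarith) (by positivity)
              _ = 2 * C2 * w ^ (-A) * (g1 + g2) := by ring
          have hK2 : ‖K w t‖ ^ 2 ≤ 8 * C2 ^ 2 * w ^ (1-(n:ℝ)) * (g1 + g2) := by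
            calc ‖K w t‖ ^ 2 ≤ (2 * C2 * w ^ (-A) * (g1 + g2)) ^ 2 :=
                  pow_le_pow_left₀ (norm_nonneg _) hKb 2
              _ = 4 * C2 ^ 2 * (w ^ (-A)) ^ 2 * (g1 + g2) ^ 2 := by ring
              _ ≤ 4 * C2 ^ 2 * (w ^ (-A)) ^ 2 * (2 * (g1 + g2)) := by
                  apply mul_le_mul_of_nonneg_left _ (by positivity)
                  nlinarith
              _ = 8 * C2 ^ 2 * w ^ (1-(n:ℝ)) * (g1 + g2) := by rw [hwA2]; ring
          have hDge : (2:ℝ) ^ (2*s) * 8 * C2 ^ 2 ≤ D := by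
            rw [hD]; nlinarith [sq_nonneg C0, sq_nonneg Cm, Real.rpow_pos_of_pos (by norm_num : (0:ℝ) < 2) (2*s)]
          calc |t| ^ (2*s) * ‖K w t‖ ^ 2
              ≤ ((2:ℝ) ^ (2*s) * w ^ (2*s)) * (8 * C2 ^ 2 * w ^ (1-(n:ℝ)) * (g1 + g2)) :=
                mul_le_mul hts hK2 (by positivity) (by positivity)
            _ = ((2:ℝ) ^ (2*s) * 8 * C2 ^ 2) * (w ^ (2*s) * w ^ (1-(n:ℝ))) * (g1 + g2) := by ring
            _ ≤ D * (w ^ (2*s) * w ^ (1-(n:ℝ))) * (g1 + g2) := by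
                apply mul_le_mul_of_nonneg_right _ (by positivity)
                exact mul_le_mul_of_nonneg_right hDge (by positivity)
            _ = D * w ^ (2*s - (n:ℝ) + 1) * (g1 + g2) := by rw [hsplit]
      · -- |t| > 2w
        have hwt : w ≤ |t| := by linarith
        have ht2 : 2 ≤ |t| := by linarith
        have habsw : |w| = w := abs_of_pos hw0
        have hu2 : |t| / 2 ≤ |t - w| := by
          have := abs_sub_abs_le_abs_sub t w
          rw [habsw] at this; linarith
        have hv2 : |t| / 2 ≤ |t + w| := by
          have h1 : |t| ≤ |t + w| + |w| := by
            calc |t| = |(t + w) - w| := by ring_nf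
              _ ≤ |t + w| + |w| := abs_sub _ _
          rw [habsw] at h1; linarith
        have hb := hbm w hw t ht0
        simp only [Nat.cast_one] at hb
        have hconv1 : ∀ x : ℝ, |x| ^ (-(1:ℝ)) = |x|⁻¹ := fun x => Real.rpow_neg_one _
        have hinv : |t - w| ^ (-(1:ℝ)) + |t + w| ^ (-(1:ℝ)) ≤ 4 * |t|⁻¹ := by
          rw [hconv1, hconv1]
          have hu0 : (0:ℝ) < |t|/2 := by linarith
          have h1 : |t - w|⁻¹ ≤ (|t|/2)⁻¹ := inv_anti₀ hu0 hu2
          have h2 : |t + w|⁻¹ ≤ (|t|/2)⁻¹ := inv_anti₀ hu0 hv2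
          have h3 : (|t|/2)⁻¹ = 2 * |t|⁻¹ := by
            field_simp
          linarith [h1, h2, h3.le]
        have hKb : ‖K w t‖ ≤ 4 * Cm * (w ^ (s - A) * |t| ^ (-s)) * |t|⁻¹ := by
          calc ‖K w t‖ ≤ Cm * w ^ ((m:ℝ) - A) * |t| ^ (-(m:ℝ))
                * (|t - w| ^ (-(1:ℝ)) + |t + w| ^ (-(1:ℝ))) := hb
            _ ≤ Cm * w ^ ((m:ℝ) - A) * |t| ^ (-(m:ℝ)) * (4 * |t|⁻¹) := by
                apply mul_le_mul_of_nonneg_left hinv (by positivity)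
            _ = 4 * Cm * (w ^ ((m:ℝ) - A) * |t| ^ (-(m:ℝ))) * |t|⁻¹ := by ring
            _ ≤ 4 * Cm * (w ^ (s - A) * |t| ^ (-s)) * |t|⁻¹ := by
                apply mul_le_mul_of_nonneg_right _ (by positivity)
                exact mul_le_mul_of_nonneg_left (aux_interp hw0 hwt hsm) (by positivity)
        have hcancel : |t| ^ (2*s) * (|t| ^ (-s)) ^ 2 = 1 := by
          rw [sq, ← Real.rpow_add ht, ← Real.rpow_add ht,
            show 2*s + (-s + -s) = 0 by ring, Real.rpow_zero]
        have hwA : (w ^ (s - A)) ^ 2 = w ^ (2*s - (n:ℝ) + 1) := by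
          rw [sq, ← Real.rpow_add hw0]; congr 1; rw [hA]; ring
        have hinv2 : (|t|⁻¹) ^ 2 ≤ 3 * g1 := by
          have ht2' : |t|^2 = t^2 := sq_abs t
          have habs : |t - w| ≤ |t| + w := by
            calc |t - w| ≤ |t| + |w| := abs_sub t w
              _ = |t| + w := by rw [habsw]
          have hub : (t - w)^2 ≤ (3/2 * |t|)^2 := by
            have h1 : |t - w| ≤ 3/2 * |t| := by linarith
            nlinarith [sq_abs (t - w), abs_nonneg (t - w)]
          have hlow : 1 + (t - w)^2 ≤ 3 * t^2 := by nlinarith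
          have h1 : (t^2)⁻¹ ≤ 3 * g1 := by
            have hg : (1:ℝ)/(t^2) ≤ 3/(1 + (t - w)^2) := by
              rw [div_le_div_iff₀ (by positivity) (by positivity)]; nlinarith
            calc (t^2)⁻¹ = 1/(t^2) := (one_div _).symm
              _ ≤ 3/(1 + (t - w)^2) := hg
              _ = 3 * g1 := by rw [div_eq_mul_inv, hg1def]
          calc (|t|⁻¹)^2 = (|t|^2)⁻¹ := by rw [← inv_pow]
            _ = (t^2)⁻¹ := by rw [ht2']
            _ ≤ 3 * g1 := h1
        have hDge : 48 * Cm ^ 2 ≤ D := by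
          rw [hD]; nlinarith [sq_nonneg C0, sq_nonneg C2, Real.rpow_pos_of_pos (by norm_num : (0:ℝ) < 2) (2*s)]
        calc |t| ^ (2*s) * ‖K w t‖ ^ 2
            ≤ |t| ^ (2*s) * (4 * Cm * (w ^ (s - A) * |t| ^ (-s)) * |t|⁻¹) ^ 2 := by
              apply mul_le_mul_of_nonneg_left _ (by positivity)
              exact pow_le_pow_left₀ (norm_nonneg _) hKb 2
          _ = (16 * Cm ^ 2) * (w ^ (s - A)) ^ 2 * (|t| ^ (2*s) * (|t| ^ (-s)) ^ 2)
              * (|t|⁻¹) ^ 2 := by ring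
          _ = (16 * Cm ^ 2) * w ^ (2*s - (n:ℝ) + 1) * (|t|⁻¹) ^ 2 := by
              rw [hcancel, hwA]; ring
          _ ≤ (16 * Cm ^ 2) * w ^ (2*s - (n:ℝ) + 1) * (3 * g1) := by
              exact mul_le_mul_of_nonneg_left hinv2 (by positivity)
          _ = (48 * Cm ^ 2) * w ^ (2*s - (n:ℝ) + 1) * g1 := by ring
          _ ≤ D * w ^ (2*s - (n:ℝ) + 1) * (g1 + g2) := by
              have h1 : (48 * Cm ^ 2) * w ^ (2*s - (n:ℝ) + 1) * g1 ≤
                  D * w ^ (2*s - (n:ℝ) + 1) * g1 := by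
                apply mul_le_mul_of_nonneg_right _ hg1pos.le
                exact mul_le_mul_of_nonneg_right hDge (by positivity)
              have h2 : D * w ^ (2*s - (n:ℝ) + 1) * g1 ≤
                  D * w ^ (2*s - (n:ℝ) + 1) * (g1 + g2) := by
                apply mul_le_mul_of_nonneg_left (by linarith) (by positivity)
              linarith
    -- integrate the majorant
    refine ⟨2 * Real.pi * D, by positivity, fun w hw => ?_⟩
    have hw0 : (0:ℝ) < w := lt_of_lt_of_le one_pos hw
    have hint1 : Integrable (fun t : ℝ => (1 + (t - w) ^ 2)⁻¹) := by
      simpa using integrable_inv_one_add_sq.comp_sub_right w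
    have hint2 : Integrable (fun t : ℝ => (1 + (t + w) ^ 2)⁻¹) := by
      simpa using integrable_inv_one_add_sq.comp_add_right w
    have hval1 : ∫ t : ℝ, (1 + (t - w) ^ 2)⁻¹ = Real.pi := by
      rw [← integral_univ_inv_one_add_sq]
      exact integral_sub_right_eq_self (fun x : ℝ => (1 + x ^ 2)⁻¹) w
    have hval2 : ∫ t : ℝ, (1 + (t + w) ^ 2)⁻¹ = Real.pi := by
      rw [← integral_univ_inv_one_add_sq]
      exact integral_add_right_eq_self (fun x : ℝ => (1 + x ^ 2)⁻¹) w
    set G : ℝ → ℝ := fun t => D * w ^ (2*s - (n:ℝ) + 1) *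
      ((1 + (t - w) ^ 2)⁻¹ + (1 + (t + w) ^ 2)⁻¹) with hGdef
    have hGint : Integrable G := (hint1.add hint2).const_mul _
    have hGval : ∫ t, G t = 2 * Real.pi * D * w ^ (2*s - (n:ℝ) + 1) := by
      rw [hGdef]
      rw [integral_const_mul, integral_add hint1 hint2, hval1, hval2]
      ring
    have h0 : ∀ᵐ t : ℝ, t ≠ (0:ℝ) := by
      refine ae_iff.mpr ?_
      simpa only [ne_eq, not_not, Set.setOf_eq_eq_singleton] using measure_singleton (0:ℝ)
    calc ∫⁻ t : ℝ, ENNReal.ofReal (|t| ^ (2 * s)) * (‖K w t‖₊ : ℝ≥0∞) ^ 2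
        = ∫⁻ t : ℝ, ENNReal.ofReal (|t| ^ (2 * s) * ‖K w t‖ ^ 2) := by
          congr 1; funext t
          rw [ENNReal.ofReal_mul (by positivity), ← enorm_eq_nnnorm, ← ofReal_norm,
            ← ENNReal.ofReal_pow (norm_nonneg _)]
      _ ≤ ∫⁻ t : ℝ, ENNReal.ofReal (G t) := by
          refine lintegral_mono_ae ?_
          filter_upwards [h0] with t ht
          exact ENNReal.ofReal_le_ofReal (key w hw t ht)
      _ = ENNReal.ofReal (∫ t, G t) :=
          (ofReal_integral_eq_lintegral_ofReal hGint
            (Filter.Eventually.of_forall fun t => by rw [hGdef]; positivity)).symm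
      _ = ENNReal.ofReal (2 * Real.pi * D * w ^ (2 * s - (n:ℝ) + 1)) := by rw [hGval]
end
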